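/- (Gradient-tracking error bound.) Let m, d ≥ 1, and for i = 1,…,m let f_i : ℝ^d → ℝ be differentiable with L_i-Lipschitz gradient; set L_mx := max_i L_i and f := (1/m)∑_{i=1}^m f_i. Let x_1,…,x_m and y_1,…,y_m be points of ℝ^d satisfying the tracking invariant (1/m)∑_{i=1}^m y_i = (1/m)∑_{i=1}^m ∇f_i(x_i), and set x̄ := (1/m)∑_i x_i and ȳ := (1/m)∑_i y_i. Then ∑_{i=1}^m ‖∇f(x_i) − y_i‖² ≤ 2·∑_{i=1}^m ‖y_i − ȳ‖² + 4·L_mx²·∑_{i=1}^m ‖x_i − x̄‖². -/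
import Mathlib


open Finset
open scoped RealInnerProductSpace

lemma pair_sum_eq {F : Type*} [NormedAddCommGroup F] [InnerProductSpace ℝ F] {m : ℕ}
    (u : Fin m → F) (h : ∑ i, u i = 0) :
    ∑ i, ∑ j, ‖u i - u j‖ ^ 2 = 2 * m * ∑ i, ‖u i‖ ^ 2 := by
  have e : ∀ i j : Fin m, ‖u i - u j‖ ^ 2 = ‖u i‖^2 - 2 * ⟪u i, u j⟫ + ‖u j‖^2 := by
    intro i j
    rw [norm_sub_sq_real]
  have h1 : ∀ i, ∑ j, (‖u i‖^2 - 2*⟪u i, u j⟫ + ‖u j‖^2)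
      = m * ‖u i‖^2 - 2 * ⟪u i, ∑ j, u j⟫ + ∑ j, ‖u j‖^2 := by
    intro i
    rw [Finset.sum_add_distrib, Finset.sum_sub_distrib, Finset.sum_const, inner_sum,
      Finset.mul_sum]
    simp [nsmul_eq_mul]
  simp_rw [e, h1, h, inner_zero_right]
  rw [Finset.sum_add_distrib, Finset.sum_sub_distrib, Finset.sum_const, ← Finset.mul_sum]
  simp [nsmul_eq_mul]
  ring

lemma grad_avg {m d : ℕ} (f : Fin m → EuclideanSpace ℝ (Fin d) → ℝ)
    (hdiff : ∀ i, Differentiable ℝ (f i)) (a : EuclideanSpace ℝ (Fin d)) :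
    gradient (fun z => (∑ j, f j z) / m) a = (m : ℝ)⁻¹ • ∑ j, gradient (f j) a := by
  have h1 : HasFDerivAt (fun z => (∑ j, f j z) / m)
      ((m : ℝ)⁻¹ • ∑ j, fderiv ℝ (f j) a) a := by
    have := (HasFDerivAt.sum (fun j (_ : j ∈ Finset.univ) =>
      (hdiff j a).hasFDerivAt)).const_mul ((m:ℝ)⁻¹)
    simpa [div_eq_inv_mul] using this
  have h2 := (hasFDerivAt_iff_hasGradientAt.mp h1).gradient
  rw [h2, map_smul, map_sum]
  rfl


/-- Gradient-tracking error bound: under the tracking invariant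
`(1/m)∑ y i = (1/m)∑ ∇f_i(x i)`, one has
`∑ ‖∇f(x i) − y i‖² ≤ 2 ∑ ‖y i − ȳ‖² + 4 L_mx² ∑ ‖x i − x̄‖²`. -/
theorem stmt15 (m d : ℕ) (hm : 1 ≤ m) (hd : 1 ≤ d)
    (f : Fin m → EuclideanSpace ℝ (Fin d) → ℝ) (Lf : Fin m → ℝ)
    (hdiff : ∀ i, Differentiable ℝ (f i))
    (hlip : ∀ i, ∀ a b : EuclideanSpace ℝ (Fin d),
      ‖gradient (f i) a - gradient (f i) b‖ ≤ Lf i * ‖a - b‖)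
    (Lmx : ℝ) (hLmx : Lmx = Finset.univ.sup' ⟨⟨0, hm⟩, Finset.mem_univ _⟩ Lf)
    (x y : Fin m → EuclideanSpace ℝ (Fin d))
    (htrack : (m : ℝ)⁻¹ • ∑ i, y i = (m : ℝ)⁻¹ • ∑ i, gradient (f i) (x i)) :
    ∑ i, ‖gradient (fun z => (∑ j, f j z) / m) (x i) - y i‖ ^ 2 ≤
      2 * ∑ i, ‖y i - (m : ℝ)⁻¹ • ∑ j, y j‖ ^ 2 +
      4 * Lmx ^ 2 * ∑ i, ‖x i - (m : ℝ)⁻¹ • ∑ j, x j‖ ^ 2 := by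
  have hm0 : (m : ℝ) ≠ 0 := by positivity
  have hminv : (0:ℝ) ≤ (m:ℝ)⁻¹ := by positivity
  set ybar : EuclideanSpace ℝ (Fin d) := (m : ℝ)⁻¹ • ∑ j, y j with hybar
  set xbar : EuclideanSpace ℝ (Fin d) := (m : ℝ)⁻¹ • ∑ j, x j with hxbar
  have hLle : ∀ j, Lf j ≤ Lmx := by
    intro j; rw [hLmx]; exact Finset.le_sup' Lf (Finset.mem_univ j)
  -- bound on ‖∇f(x i) - ybar‖
  have hA : ∀ i, ‖gradient (fun z => (∑ j, f j z) / m) (x i) - ybar‖ ^ 2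
      ≤ Lmx ^ 2 * (m:ℝ)⁻¹ * ∑ j, ‖x i - x j‖ ^ 2 := by
    intro i
    have hrw : gradient (fun z => (∑ j, f j z) / m) (x i) - ybar
        = (m:ℝ)⁻¹ • ∑ j, (gradient (f j) (x i) - gradient (f j) (x j)) := by
      rw [grad_avg f hdiff, htrack, ← smul_sub, ← Finset.sum_sub_distrib]
    have hn : ‖gradient (fun z => (∑ j, f j z) / m) (x i) - ybar‖
        ≤ (m:ℝ)⁻¹ * (Lmx * ∑ j, ‖x i - x j‖) := by
      rw [hrw, norm_smul, Real.norm_eq_abs, abs_of_nonneg hminv]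
      gcongr
      calc ‖∑ j, (gradient (f j) (x i) - gradient (f j) (x j))‖
          ≤ ∑ j, ‖gradient (f j) (x i) - gradient (f j) (x j)‖ := norm_sum_le _ _
        _ ≤ ∑ j, Lmx * ‖x i - x j‖ := by
            apply Finset.sum_le_sum
            intro j _
            exact le_trans (hlip j (x i) (x j))
              (mul_le_mul_of_nonneg_right (hLle j) (norm_nonneg _))
        _ = Lmx * ∑ j, ‖x i - x j‖ := by rw [Finset.mul_sum]
    have hsq : ‖gradient (fun z => (∑ j, f j z) / m) (x i) - ybar‖ ^ 2
        ≤ ((m:ℝ)⁻¹ * (Lmx * ∑ j, ‖x i - x j‖)) ^ 2 :=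
      pow_le_pow_left₀ (norm_nonneg _) hn 2
    have hcs : (∑ j, ‖x i - x j‖) ^ 2 ≤ (m:ℝ) * ∑ j, ‖x i - x j‖ ^ 2 := by
      have := sq_sum_le_card_mul_sum_sq (s := (Finset.univ : Finset (Fin m)))
        (f := fun j => ‖x i - x j‖)
      simpa using this
    calc ‖gradient (fun z => (∑ j, f j z) / m) (x i) - ybar‖ ^ 2
        ≤ ((m:ℝ)⁻¹ * (Lmx * ∑ j, ‖x i - x j‖)) ^ 2 := hsq
      _ = (m:ℝ)⁻¹ ^ 2 * Lmx ^ 2 * (∑ j, ‖x i - x j‖) ^ 2 := by ring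
      _ ≤ (m:ℝ)⁻¹ ^ 2 * Lmx ^ 2 * ((m:ℝ) * ∑ j, ‖x i - x j‖ ^ 2) := by
          apply mul_le_mul_of_nonneg_left hcs; positivity
      _ = Lmx ^ 2 * (m:ℝ)⁻¹ * ((m:ℝ)⁻¹ * (m:ℝ)) * ∑ j, ‖x i - x j‖ ^ 2 := by ring
      _ = Lmx ^ 2 * (m:ℝ)⁻¹ * ∑ j, ‖x i - x j‖ ^ 2 := by
          rw [inv_mul_cancel₀ hm0, mul_one]
  -- the pairwise identity
  have husum : ∑ i, (x i - xbar) = 0 := by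
    rw [Finset.sum_sub_distrib, Finset.sum_const, hxbar, Finset.card_univ, Fintype.card_fin,
      ← Nat.cast_smul_eq_nsmul ℝ, smul_smul, mul_inv_cancel₀ hm0, one_smul, sub_self]
  have hpair : ∑ i, ∑ j, ‖x i - x j‖ ^ 2 = 2 * m * ∑ i, ‖x i - xbar‖ ^ 2 := by
    have := pair_sum_eq (fun i => x i - xbar) husum
    simpa using this
  -- per-term split
  have hsplit : ∀ i, ‖gradient (fun z => (∑ j, f j z) / m) (x i) - y i‖ ^ 2
      ≤ 2 * ‖gradient (fun z => (∑ j, f j z) / m) (x i) - ybar‖ ^ 2 + 2 * ‖y i - ybar‖ ^ 2 := by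
    intro i
    have ht := norm_sub_le_norm_sub_add_norm_sub
        (gradient (fun z => (∑ j, f j z) / m) (x i)) ybar (y i)
    rw [norm_sub_rev ybar (y i)] at ht
    nlinarith [ht, sq_nonneg (‖gradient (fun z => (∑ j, f j z) / m) (x i) - ybar‖ - ‖y i - ybar‖),
      norm_nonneg (gradient (fun z => (∑ j, f j z) / m) (x i) - y i),
      norm_nonneg (gradient (fun z => (∑ j, f j z) / m) (x i) - ybar),
      norm_nonneg (y i - ybar)]
  calc ∑ i, ‖gradient (fun z => (∑ j, f j z) / m) (x i) - y i‖ ^ 2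
      ≤ ∑ i, (2 * ‖gradient (fun z => (∑ j, f j z) / m) (x i) - ybar‖ ^ 2
          + 2 * ‖y i - ybar‖ ^ 2) := Finset.sum_le_sum fun i _ => hsplit i

    _ = 2 * ∑ i, ‖y i - ybar‖ ^ 2
        + 2 * ∑ i, ‖gradient (fun z => (∑ j, f j z) / m) (x i) - ybar‖ ^ 2 := by
        rw [Finset.sum_add_distrib, ← Finset.mul_sum, ← Finset.mul_sum]; ring
    _ ≤ 2 * ∑ i, ‖y i - ybar‖ ^ 2
        + 2 * ∑ i, Lmx ^ 2 * (m:ℝ)⁻¹ * ∑ j, ‖x i - x j‖ ^ 2 := by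
        gcongr with i hi
        exact hA i
    _ = 2 * ∑ i, ‖y i - ybar‖ ^ 2
        + 2 * (Lmx ^ 2 * (m:ℝ)⁻¹) * ∑ i, ∑ j, ‖x i - x j‖ ^ 2 := by
        rw [← Finset.mul_sum]; ring
    _ = 2 * ∑ i, ‖y i - ybar‖ ^ 2 + 4 * Lmx ^ 2 * ∑ i, ‖x i - xbar‖ ^ 2 := by
        rw [hpair]
        field_simp
        ring
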